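/- Let x̲ = (s₁,…,s_l) ∈ S^l and for e ∈ {0,1}^l let x̲^e = s₁^{e₁}⋯s_l^{e_l} ∈ W. Assign to each index i the label U if x_{i-1} s_i > x_{i-1} (Bruhat order) and D otherwise, where x_i = s₁^{e₁}⋯s_i^{e_i}. If e, f ∈ {0,1}^l satisfy x̲^e = x̲^f and have the same label at every index, then e = f. -/
import Mathlib


/-- The partial product `x_k = s₁^{e₁} ⋯ s_k^{e_k}` attached to a word `x = (s₁,…,s_l)`
and a 01-sequence `e`. -/
noncomputable def pprodF {B W : Type} [Group W] {M : CoxeterMatrix B} (cs : CoxeterSystem M W)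
    (x : List B) (e : Fin x.length → Bool) (k : ℕ) : W :=
  (((List.ofFn fun j : Fin x.length => if e j then cs.simple (x.get j) else 1)).take k).prod

/-- The label of `e` at index `k` is `U` iff `x_{k-1} s_k > x_{k-1}`
(equivalently `ℓ(x_{k-1} s_k) > ℓ(x_{k-1})`). -/
noncomputable def IsU {B W : Type} [Group W] {M : CoxeterMatrix B} (cs : CoxeterSystem M W)
    (x : List B) (e : Fin x.length → Bool) (k : Fin x.length) : Prop :=
  cs.length (pprodF cs x e k * cs.simple (x.get k)) > cs.length (pprodF cs x e k)

/-- If `e, f ∈ {0,1}^l` satisfy `x^e = x^f` and have the same label (U or D)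
at every index, then `e = f`. -/
theorem statement5 {B W : Type} [Group W] {M : CoxeterMatrix B} (cs : CoxeterSystem M W)
    (x : List B) (e f : Fin x.length → Bool)
    (hprod : pprodF cs x e x.length = pprodF cs x f x.length)
    (hlab : ∀ k : Fin x.length, IsU cs x e k ↔ IsU cs x f k) :
    e = f := by
  by_contra hne
  -- the set of indices where e and f differ
  set D : Finset (Fin x.length) := Finset.univ.filter (fun j => e j ≠ f j) with hD
  have hDne : D.Nonempty := by
    rcases Function.ne_iff.mp hne with ⟨j, hj⟩
    exact ⟨j, by simp [hD, hj]⟩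
  set k : Fin x.length := D.max' hDne with hk
  have hkD : e k ≠ f k := by
    have := D.max'_mem hDne
    simpa [hD] using this
  have hup : ∀ j : Fin x.length, k < j → e j = f j := by
    intro j hj
    by_contra h
    exact absurd (D.le_max' j (by simp [hD, h])) (not_le.mpr hj)
  set Le : List W := List.ofFn fun j : Fin x.length => if e j then cs.simple (x.get j) else 1
    with hLe
  set Lf : List W := List.ofFn fun j : Fin x.length => if f j then cs.simple (x.get j) else 1
    with hLf
  have hlen_e : Le.length = x.length := by simp [hLe]
  have hlen_f : Lf.length = x.length := by simp [hLf]
  -- drops beyond k+1 agree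
  have hdrop : Le.drop (k + 1) = Lf.drop (k + 1) := by
    apply List.ext_getElem
    · simp [hlen_e, hlen_f]
    · intro i h1 h2
      rw [List.getElem_drop, List.getElem_drop]
      have hlt : k + 1 + i < x.length := by
        simp [List.length_drop, hlen_e] at h1
        omega
      have : e ⟨k + 1 + i, hlt⟩ = f ⟨k + 1 + i, hlt⟩ := by
        apply hup
        simp [Fin.lt_def]
        omega
      simp [hLe, hLf, List.getElem_ofFn]
      rw [this]
  -- full products
  have hfull_e : pprodF cs x e x.length = Le.prod := by
    rw [pprodF, ← hLe, List.take_of_length_le (le_of_eq hlen_e)]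
  have hfull_f : pprodF cs x f x.length = Lf.prod := by
    rw [pprodF, ← hLf, List.take_of_length_le (le_of_eq hlen_f)]
  have hsplit_e := List.prod_take_mul_prod_drop Le (k + 1)
  have hsplit_f := List.prod_take_mul_prod_drop Lf (k + 1)
  have htake : (Le.take (k + 1)).prod = (Lf.take (k + 1)).prod := by
    have : (Le.take (k + 1)).prod * (Le.drop (k + 1)).prod
        = (Lf.take (k + 1)).prod * (Le.drop (k + 1)).prod := by
      rw [hsplit_e, hdrop, hsplit_f, ← hfull_e, ← hfull_f, hprod]
    exact mul_right_cancel this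
  have hk_e : (k : ℕ) < Le.length := by rw [hlen_e]; exact k.2
  have hk_f : (k : ℕ) < Lf.length := by rw [hlen_f]; exact k.2
  rw [List.prod_take_succ Le k hk_e, List.prod_take_succ Lf k hk_f] at htake
  have hget_e : Le[(k : ℕ)] = if e k then cs.simple (x.get k) else 1 := by
    simp [hLe, List.getElem_ofFn]
  have hget_f : Lf[(k : ℕ)] = if f k then cs.simple (x.get k) else 1 := by
    simp [hLf, List.getElem_ofFn]
  rw [hget_e, hget_f] at htake
  have hpe : pprodF cs x e k = (Le.take k).prod := by rw [pprodF, ← hLe]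
  have hpf : pprodF cs x f k = (Lf.take k).prod := by rw [pprodF, ← hLf]
  set a := (List.take (↑k : ℕ) Le).prod with ha
  set b := (List.take (↑k : ℕ) Lf).prod with hb
  have hlabk := hlab k
  rw [IsU, IsU, hpe, hpf] at hlabk
  simp only [List.get_eq_getElem] at htake hlabk
  rcases Bool.eq_false_or_eq_true (e k) with he | he <;>
    rcases Bool.eq_false_or_eq_true (f k) with hf | hf
  · exact hkD (he.trans hf.symm)
  · -- e k = true, f k = false : a * s = b
    rw [he, hf] at htake
    simp only [if_true, if_false, Bool.false_eq_true, mul_one] at htake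
    have h2 : b * cs.simple x[(k : ℕ)] = a := by
      rw [← htake, mul_assoc, cs.simple_mul_simple_self, mul_one]
    have hne' := cs.length_mul_simple_ne a (x[(k : ℕ)])
    rw [h2, ← htake] at hlabk
    omega
  · -- e k = false, f k = true : a = b * s
    rw [he, hf] at htake
    simp only [if_true, if_false, Bool.false_eq_true, mul_one] at htake
    have h2 : a * cs.simple x[(k : ℕ)] = b := by
      rw [htake, mul_assoc, cs.simple_mul_simple_self, mul_one]
    have hne' := cs.length_mul_simple_ne b (x[(k : ℕ)])
    rw [h2, htake] at hlabk
    omega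
  · exact hkD (he.trans hf.symm)
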